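/- Collisions occur only at zero angular momentum: let T ∈ (0, ∞) and let q, p : [0, T) → ℝ³ be differentiable with q(t) ∉ {o₁, o₂}, q'(t) = p(t), and p'(t) = −∇V(q(t)) for all t ∈ [0, T). If q(t) → o₁ as t → T⁻ (a collision with the first center), then L_z(q(t), p(t)) = 0 for all t ∈ [0, T). The same conclusion holds if instead q(t) → o₂ as t → T⁻. -/

import Mathlib

noncomputable section

open Real Filter Topology
open scoped RealInnerProductSpace

/-- Euclidean 3-space. -/
abbrev R3 : Type := EuclideanSpace ℝ (Fin 3)

/-- The vector `(x, y, z)` in `R3`. -/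
def vec3 (x y z : ℝ) : R3 := (WithLp.equiv 2 (Fin 3 → ℝ)).symm ![x, y, z]

/-- The first center `o₁ = (0,0,-a)`. -/
def ctr1 (a : ℝ) : R3 := vec3 0 0 (-a)

/-- The second center `o₂ = (0,0,a)`. -/
def ctr2 (a : ℝ) : R3 := vec3 0 0 a

/-- The Euler two-center potential `V(q) = -μ₁/r₁(q) - μ₂/r₂(q)`. -/
def eulerV (a μ1 μ2 : ℝ) (q : R3) : ℝ := -μ1 / ‖q - ctr1 a‖ - μ2 / ‖q - ctr2 a‖

/-- The angular momentum `L_z(q,p) = x p_y - y p_x`. -/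
def angMom (q p : R3) : ℝ := q 0 * p 1 - q 1 * p 0

/-- The cross product `q × p` in `R3`. -/
def cross3 (q p : R3) : R3 :=
  vec3 (q 1 * p 2 - q 2 * p 1) (q 2 * p 0 - q 0 * p 2) (q 0 * p 1 - q 1 * p 0)

/-- The Euler Hamiltonian `H(q,p) = ‖p‖²/2 + V(q)`. -/
def eulerH (a μ1 μ2 : ℝ) (q p : R3) : ℝ := ‖p‖ ^ 2 / 2 + eulerV a μ1 μ2 q

/-- The separation constant
`G(q,p) = H + (‖q×p‖² - a²(pₓ²+p_y²))/2 + a(z+a)μ₁/r₁ - a(z-a)μ₂/r₂`. -/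
def eulerG (a μ1 μ2 : ℝ) (q p : R3) : ℝ :=
  eulerH a μ1 μ2 q p + (‖cross3 q p‖ ^ 2 - a ^ 2 * ((p 0) ^ 2 + (p 1) ^ 2)) / 2
    + a * (q 2 + a) * μ1 / ‖q - ctr1 a‖ - a * (q 2 - a) * μ2 / ‖q - ctr2 a‖

/-! ### Auxiliary lemmas -/

lemma grad_aux (μ : ℝ) (c x : R3) (hx : x ≠ c) :
    HasGradientAt (fun q : R3 => -μ / ‖q - c‖) ((μ / ‖x - c‖ ^ 3) • (x - c)) x := by
  have hr : (0:ℝ) < ‖x - c‖ := by simpa [sub_eq_zero] using hx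
  have hsq : HasFDerivAt (fun q : R3 => ‖q - c‖ ^ 2) (2 • (innerSL ℝ (x - c))) x := by
    have := (hasFDerivAt_id x).sub_const c |>.norm_sq
    simpa using this
  have hφ : HasDerivAt (fun s : ℝ => -μ / Real.sqrt s) (μ / (2 * ‖x - c‖ ^ 3)) (‖x - c‖ ^ 2) := by
    have h1 : HasDerivAt Real.sqrt (1 / (2 * Real.sqrt (‖x - c‖ ^ 2))) (‖x - c‖ ^ 2) :=
      Real.hasDerivAt_sqrt (by positivity)
    have h2 := ((hasDerivAt_const (‖x - c‖ ^ 2) (-μ)).div h1 (by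
      rw [Real.sqrt_sq hr.le]; exact hr.ne'))
    convert h2 using 1
    case e'_4 | e'_5 | e'_8 => rfl
    rw [Real.sqrt_sq hr.le, div_eq_div_iff (by positivity) (by positivity)]
    field_simp [hr.ne']
    ring
  have hcomp := hφ.comp_hasFDerivAt x hsq
  rw [hasGradientAt_iff_hasFDerivAt]
  have hfun : (fun q : R3 => -μ / ‖q - c‖) = fun q => -μ / Real.sqrt (‖q - c‖ ^ 2) :=
    funext fun q => by rw [Real.sqrt_sq (norm_nonneg _)]
  have hL : (InnerProductSpace.toDual ℝ R3) ((μ / ‖x - c‖ ^ 3) • (x - c))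
      = (μ / (2 * ‖x - c‖ ^ 3)) • (2 • innerSL ℝ (x - c)) := by
    ext v
    simp [real_inner_smul_left]
    ring
  rw [hfun, hL]
  exact hcomp

lemma gradV_at (a μ1 μ2 : ℝ) (x : R3) (h1 : x ≠ ctr1 a) (h2 : x ≠ ctr2 a) :
    HasGradientAt (eulerV a μ1 μ2)
      ((μ1 / ‖x - ctr1 a‖ ^ 3) • (x - ctr1 a) + (μ2 / ‖x - ctr2 a‖ ^ 3) • (x - ctr2 a)) x := by
  have g1 := grad_aux μ1 (ctr1 a) x h1
  have g2 := grad_aux μ2 (ctr2 a) x h2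
  rw [hasGradientAt_iff_hasFDerivAt] at g1 g2 ⊢
  rw [map_add]
  have hfun : eulerV a μ1 μ2 = fun q => (-μ1 / ‖q - ctr1 a‖) + (-μ2 / ‖q - ctr2 a‖) := by
    funext q; simp [eulerV]; ring
  rw [hfun]
  exact g1.add g2

lemma normsq3 (x : R3) : ‖x‖ ^ 2 = x 0 ^ 2 + x 1 ^ 2 + x 2 ^ 2 := by
  rw [EuclideanSpace.norm_eq, Real.sq_sqrt (by positivity)]
  simp [Fin.sum_univ_three, sq_abs]

lemma const_of_deriv0 {f : ℝ → ℝ} {T : ℝ} (hT : 0 < T)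
    (hf : ∀ t ∈ Set.Ico (0:ℝ) T, HasDerivWithinAt f 0 (Set.Ico (0:ℝ) T) t) :
    ∀ t ∈ Set.Ico (0:ℝ) T, f t = f 0 := by
  intro t ht
  have h := (convex_Ico (0:ℝ) T).norm_image_sub_le_of_norm_hasDerivWithin_le
    (C := (0:ℝ)) (f' := fun _ => (0:ℝ)) (fun x hx => hf x hx) (fun x _ => by simp)
    (⟨le_rfl, hT⟩ : (0:ℝ) ∈ Set.Ico (0:ℝ) T) ht
  simp only [zero_mul] at h
  have := norm_le_zero_iff.mp h
  exact sub_eq_zero.mp this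

lemma key_lim (L H0 m1 m2 A : ℝ) (hA : 0 < A) (r1 r2 : ℝ → ℝ) (l : Filter ℝ) [l.NeBot]
    (h1 : Tendsto r1 l (𝓝 0)) (h2 : Tendsto r2 l (𝓝 A))
    (hineq : ∀ᶠ t in l,
      L ^ 2 ≤ 2 * H0 * (r1 t) ^ 2 + 2 * m1 * (r1 t) + 2 * m2 * (r1 t) ^ 2 / (r2 t)) :
    L = 0 := by
  have e1 : Tendsto (fun t => 2 * H0 * (r1 t) ^ 2 + 2 * m1 * (r1 t)
      + 2 * m2 * (r1 t) ^ 2 / (r2 t)) l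
      (𝓝 (2 * H0 * 0 ^ 2 + 2 * m1 * 0 + 2 * m2 * 0 ^ 2 / A)) :=
    ((((h1.pow 2).const_mul (2 * H0)).add (h1.const_mul (2 * m1))).add
      (((h1.pow 2).const_mul (2 * m2)).div h2 hA.ne'))
  have e2 : (2 * H0 * 0 ^ 2 + 2 * m1 * 0 + 2 * m2 * 0 ^ 2 / A) = 0 := by norm_num
  rw [e2] at e1
  have hle : L ^ 2 ≤ 0 := ge_of_tendsto e1 hineq
  have : L ^ 2 = 0 := le_antisymm hle (sq_nonneg L)
  exact (pow_eq_zero_iff two_ne_zero).mp this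

/-- Collisions occur only at zero angular momentum: if a solution of the
Euler problem on `[0,T)` converges to one of the centers as `t → T⁻`, then
`L_z(q(t),p(t)) = 0` for all `t ∈ [0,T)`. -/
theorem statement19 (a μ1 μ2 : ℝ) (ha : 0 < a) (T : ℝ) (hT : 0 < T) (q p : ℝ → R3)
    (hcent : ∀ t ∈ Set.Ico 0 T, q t ≠ ctr1 a ∧ q t ≠ ctr2 a)
    (hq : ∀ t ∈ Set.Ico 0 T, HasDerivWithinAt q (p t) (Set.Ico 0 T) t)
    (hp : ∀ t ∈ Set.Ico 0 T,
      HasDerivWithinAt p (-gradient (eulerV a μ1 μ2) (q t)) (Set.Ico 0 T) t)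
    (hcol : Tendsto q (𝓝[<] T) (𝓝 (ctr1 a)) ∨ Tendsto q (𝓝[<] T) (𝓝 (ctr2 a))) :
    ∀ t ∈ Set.Ico 0 T, angMom (q t) (p t) = 0 := by
  set s : Set ℝ := Set.Ico 0 T with hs
  -- the gradient along the trajectory
  set g : ℝ → R3 := fun t => (μ1 / ‖q t - ctr1 a‖ ^ 3) • (q t - ctr1 a)
    + (μ2 / ‖q t - ctr2 a‖ ^ 3) • (q t - ctr2 a) with hg
  have hgrad : ∀ t ∈ s, HasGradientAt (eulerV a μ1 μ2) (g t) (q t) := fun t ht =>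
    gradV_at a μ1 μ2 (q t) (hcent t ht).1 (hcent t ht).2
  have hp' : ∀ t ∈ s, HasDerivWithinAt p (-(g t)) s t := by
    intro t ht
    have h := hp t ht
    rwa [(hgrad t ht).gradient] at h
  -- coordinate derivatives
  have hqc : ∀ (i : Fin 3), ∀ t ∈ s, HasDerivWithinAt (fun τ => q τ i) (p t i) s t := by
    intro i t ht
    have h := (EuclideanSpace.proj i).hasFDerivAt.comp_hasDerivWithinAt t (hq t ht)
    simp at h
    exact h
  have hpc : ∀ (i : Fin 3), ∀ t ∈ s, HasDerivWithinAt (fun τ => p τ i) (-(g t i)) s t := by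
    intro i t ht
    have h := (EuclideanSpace.proj i).hasFDerivAt.comp_hasDerivWithinAt t (hp' t ht)
    simp at h
    exact h
  -- the first two coordinates of the gradient
  have hg0 : ∀ t, g t 0 = (μ1 / ‖q t - ctr1 a‖ ^ 3 + μ2 / ‖q t - ctr2 a‖ ^ 3) * q t 0 := by
    intro t; simp [hg, ctr1, ctr2, vec3]; ring
  have hg1 : ∀ t, g t 1 = (μ1 / ‖q t - ctr1 a‖ ^ 3 + μ2 / ‖q t - ctr2 a‖ ^ 3) * q t 1 := by
    intro t; simp [hg, ctr1, ctr2, vec3]; ring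
  -- conservation of angular momentum
  have hLd : ∀ t ∈ s, HasDerivWithinAt (fun τ => angMom (q τ) (p τ)) 0 s t := by
    intro t ht
    have h3 := ((hqc 0 t ht).mul (hpc 1 t ht)).sub ((hqc 1 t ht).mul (hpc 0 t ht))
    have hval : p t 0 * p t 1 + q t 0 * -(g t 1) - (p t 1 * p t 0 + q t 1 * -(g t 0)) = 0 := by
      rw [hg0 t, hg1 t]; ring
    rw [hval] at h3
    exact h3
  have hLc := const_of_deriv0 hT hLd
  -- conservation of energy
  have hEd : ∀ t ∈ s, HasDerivWithinAt (fun τ => eulerH a μ1 μ2 (q τ) (p τ)) 0 s t := by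
    intro t ht
    have hT1 : HasDerivWithinAt (fun τ => ‖p τ‖ ^ 2) (2 * ⟪p t, -(g t)⟫) s t :=
      (hp' t ht).norm_sq
    have hT2 : HasDerivWithinAt (fun τ => eulerV a μ1 μ2 (q τ)) (⟪g t, p t⟫) s t := by
      have := (hgrad t ht).hasFDerivAt.comp_hasDerivWithinAt t (hq t ht)
      simp [InnerProductSpace.toDual_apply_apply] at this
      exact this
    have h3 := (hT1.div_const 2).add hT2
    have hval : 2 * ⟪p t, -(g t)⟫ / 2 + ⟪g t, p t⟫ = 0 := by
      rw [inner_neg_right, real_inner_comm (g t) (p t)]; ring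
    rw [hval] at h3
    exact h3
  have hEc := const_of_deriv0 hT hEd
  set L := angMom (q 0) (p 0) with hLdef
  set H0 := eulerH a μ1 μ2 (q 0) (p 0) with hH0def
  suffices hL0 : L = 0 by
    intro t ht
    rw [hLc t ht, hL0]
  -- eventually in the past filter, the time is in `[0,T)`
  have hmem : ∀ᶠ t in 𝓝[<] T, t ∈ s := by
    have hIoo : Set.Ioo (max 0 (T - 1)) T ∈ 𝓝[<] T :=
      Ioo_mem_nhdsLT_of_mem ⟨max_lt hT (by linarith), le_rfl⟩
    filter_upwards [hIoo] with t ht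
    exact ⟨le_of_lt (lt_of_le_of_lt (le_max_left 0 (T - 1)) ht.1), ht.2⟩
  -- the main argument, symmetric in the two centers
  have main : ∀ (c c' : R3) (m m' : ℝ), c ≠ c' → c 0 = 0 → c 1 = 0 →
      (∀ t ∈ s, q t ≠ c ∧ q t ≠ c') →
      (∀ x : R3, eulerV a μ1 μ2 x = -m / ‖x - c‖ - m' / ‖x - c'‖) →
      Tendsto q (𝓝[<] T) (𝓝 c) → L = 0 := by
    intro c c' m m' hcc hc0 hc1 hne hVeq hq_c
    have hA : 0 < ‖c - c'‖ := by
      rw [norm_pos_iff]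
      exact sub_ne_zero.mpr hcc
    have h1 : Tendsto (fun t => ‖q t - c‖) (𝓝[<] T) (𝓝 0) := by
      have := (hq_c.sub (tendsto_const_nhds (α := ℝ) (x := c))).norm
      simpa using this
    have h2 : Tendsto (fun t => ‖q t - c'‖) (𝓝[<] T) (𝓝 ‖c - c'‖) :=
      (hq_c.sub (tendsto_const_nhds (α := ℝ) (x := c'))).norm
    apply key_lim L H0 m m' ‖c - c'‖ hA (fun t => ‖q t - c‖) (fun t => ‖q t - c'‖) (𝓝[<] T)
      h1 h2
    filter_upwards [hmem] with t ht
    have hr1 : (0:ℝ) < ‖q t - c‖ := by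
      rw [norm_pos_iff]; exact sub_ne_zero.mpr (hne t ht).1
    have hr2 : (0:ℝ) < ‖q t - c'‖ := by
      rw [norm_pos_iff]; exact sub_ne_zero.mpr (hne t ht).2
    -- the energy identity
    have hE := hEc t ht
    rw [eulerH, hVeq] at hE
    have hpn : ‖p t‖ ^ 2 = 2 * H0 + 2 * (m / ‖q t - c‖) + 2 * (m' / ‖q t - c'‖) := by
      rw [neg_div] at hE
      linarith
    -- bound on the angular momentum
    have hb1 : q t 0 ^ 2 + q t 1 ^ 2 ≤ ‖q t - c‖ ^ 2 := by
      have h := normsq3 (q t - c)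
      simp only [PiLp.sub_apply, hc0, hc1, sub_zero] at h
      nlinarith [sq_nonneg (q t 2 - c 2)]
    have hb2 : p t 0 ^ 2 + p t 1 ^ 2 ≤ ‖p t‖ ^ 2 := by
      have h := normsq3 (p t)
      nlinarith [sq_nonneg (p t 2)]
    have hCS : L ^ 2 ≤ (q t 0 ^ 2 + q t 1 ^ 2) * (p t 0 ^ 2 + p t 1 ^ 2) := by
      rw [← hLc t ht]
      simp only [angMom]
      nlinarith [sq_nonneg (q t 0 * p t 0 + q t 1 * p t 1)]
    have hmul : (q t 0 ^ 2 + q t 1 ^ 2) * (p t 0 ^ 2 + p t 1 ^ 2)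
        ≤ ‖q t - c‖ ^ 2 * ‖p t‖ ^ 2 :=
      mul_le_mul hb1 hb2 (by positivity) (by positivity)
    have hfin : ‖q t - c‖ ^ 2 * ‖p t‖ ^ 2
        = 2 * H0 * ‖q t - c‖ ^ 2 + 2 * m * ‖q t - c‖ + 2 * m' * ‖q t - c‖ ^ 2 / ‖q t - c'‖ := by
      rw [hpn]
      field_simp
    linarith
  rcases hcol with h | h
  · apply main (ctr1 a) (ctr2 a) μ1 μ2 _ _ _ hcent (fun x => rfl) h
    · intro hcon
      have := congrFun (congrArg (fun (v : R3) => (v : Fin 3 → ℝ)) hcon) 2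
      simp [ctr1, ctr2, vec3] at this
      linarith
    · simp [ctr1, vec3]
    · simp [ctr1, vec3]
  · apply main (ctr2 a) (ctr1 a) μ2 μ1 _ _ _ (fun t ht => ⟨(hcent t ht).2, (hcent t ht).1⟩)
      (fun x => by rw [eulerV]; ring) h
    · intro hcon
      have := congrFun (congrArg (fun (v : R3) => (v : Fin 3 → ℝ)) hcon) 2
      simp [ctr1, ctr2, vec3] at this
      linarith
    · simp [ctr2, vec3]
    · simp [ctr2, vec3]
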